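/- arXiv:math/0010308 — 2 statements merged into one kernel-verified Lean document; each statement's English description precedes it below -/
import Mathlib

section
/- If T is self-adjoint with −1 ≤ T ≤ 1 and satisfies the braid relation T₁T₂T₁ = T₂T₁T₂, then R₃ = 1 + T₁ + T₁T₂ satisfies R₃* (1 + T₂) R₃ ≥ 0, i.e., P₃ is positive semidefinite, where P₃ = (1 + T₂) R₃. -/
/-- `ampl1 d T` is the amplification `T ⊗ 1` of an operator `T` on
`ℂ^d ⊗ ℂ^d` (modelled as `EuclideanSpace ℂ (Fin d × Fin d)`) to the triple
tensor power, acting on the first two tensor factors. -/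
noncomputable def ampl1 (d : ℕ)
    (T : EuclideanSpace ℂ (Fin d × Fin d) →L[ℂ] EuclideanSpace ℂ (Fin d × Fin d)) :
    EuclideanSpace ℂ (Fin d × Fin d × Fin d) →L[ℂ] EuclideanSpace ℂ (Fin d × Fin d × Fin d) :=
  LinearMap.toContinuousLinearMap
    { toFun := fun x => WithLp.toLp 2 (fun p =>
        T (WithLp.toLp 2 (fun r => x (r.1, r.2, p.2.2) : Fin d × Fin d → ℂ)) (p.1, p.2.1)
        : Fin d × Fin d × Fin d → ℂ)
      map_add' := by
        intro x y; apply WithLp.ofLp_injective; funext p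
        have : (WithLp.toLp 2 (fun r => (x + y) (r.1, r.2, p.2.2) : Fin d × Fin d → ℂ) :
            EuclideanSpace ℂ (Fin d × Fin d)) =
            (WithLp.toLp 2 (fun r => x (r.1, r.2, p.2.2) : Fin d × Fin d → ℂ) :
            EuclideanSpace ℂ (Fin d × Fin d)) +
            WithLp.toLp 2 (fun r => y (r.1, r.2, p.2.2) : Fin d × Fin d → ℂ) := rfl
        show T _ _ = _
        rw [this, map_add]; rfl
      map_smul' := by
        intro c x; apply WithLp.ofLp_injective; funext p
        have : (WithLp.toLp 2 (fun r => (c • x) (r.1, r.2, p.2.2) : Fin d × Fin d → ℂ) :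
            EuclideanSpace ℂ (Fin d × Fin d)) =
            c • (WithLp.toLp 2 (fun r => x (r.1, r.2, p.2.2) : Fin d × Fin d → ℂ) :
            EuclideanSpace ℂ (Fin d × Fin d)) := rfl
        show T _ _ = _
        rw [this, map_smul]; rfl }

/-- `ampl2 d T` is the amplification `1 ⊗ T`, acting on the last two tensor
factors of the triple tensor power. -/
noncomputable def ampl2 (d : ℕ)
    (T : EuclideanSpace ℂ (Fin d × Fin d) →L[ℂ] EuclideanSpace ℂ (Fin d × Fin d)) :
    EuclideanSpace ℂ (Fin d × Fin d × Fin d) →L[ℂ] EuclideanSpace ℂ (Fin d × Fin d × Fin d) :=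
  LinearMap.toContinuousLinearMap
    { toFun := fun x => WithLp.toLp 2 (fun p =>
        T (WithLp.toLp 2 (fun r => x (p.1, r.1, r.2) : Fin d × Fin d → ℂ)) (p.2.1, p.2.2)
        : Fin d × Fin d × Fin d → ℂ)
      map_add' := by
        intro x y; apply WithLp.ofLp_injective; funext p
        have : (WithLp.toLp 2 (fun r => (x + y) (p.1, r.1, r.2) : Fin d × Fin d → ℂ) :
            EuclideanSpace ℂ (Fin d × Fin d)) =
            (WithLp.toLp 2 (fun r => x (p.1, r.1, r.2) : Fin d × Fin d → ℂ) :
            EuclideanSpace ℂ (Fin d × Fin d)) +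
            WithLp.toLp 2 (fun r => y (p.1, r.1, r.2) : Fin d × Fin d → ℂ) := rfl
        show T _ _ = _
        rw [this, map_add]; rfl
      map_smul' := by
        intro c x; apply WithLp.ofLp_injective; funext p
        have : (WithLp.toLp 2 (fun r => (c • x) (p.1, r.1, r.2) : Fin d × Fin d → ℂ) :
            EuclideanSpace ℂ (Fin d × Fin d)) =
            c • (WithLp.toLp 2 (fun r => x (p.1, r.1, r.2) : Fin d × Fin d → ℂ) :
            EuclideanSpace ℂ (Fin d × Fin d)) := rfl
        show T _ _ = _
        rw [this, map_smul]; rfl }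


open scoped InnerProductSpace
namespace P3aux
variable {d : ℕ}
abbrev E2 (d : ℕ) := EuclideanSpace ℂ (Fin d × Fin d)
abbrev E3 (d : ℕ) := EuclideanSpace ℂ (Fin d × Fin d × Fin d)

def slice1 (x : E3 d) (k : Fin d) : E2 d := WithLp.toLp 2 (fun r : Fin d × Fin d => x (r.1, r.2, k))

lemma ampl1_apply (T : E2 d →L[ℂ] E2 d) (x : E3 d) (p : Fin d × Fin d × Fin d) :
    ampl1 d T x p = T (slice1 x p.2.2) (p.1, p.2.1) := rfl

lemma slice1_ampl1 (T : E2 d →L[ℂ] E2 d) (x : E3 d) (k : Fin d) :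
    slice1 (ampl1 d T x) k = T (slice1 x k) := rfl

lemma ampl1_one : ampl1 d (1 : E2 d →L[ℂ] E2 d) = 1 := by
  ext x p; rfl

lemma inner_ampl1 (T : E2 d →L[ℂ] E2 d) (x y : E3 d) :
    ⟪ampl1 d T x, y⟫_ℂ = ∑ k : Fin d, ⟪T (slice1 x k), slice1 y k⟫_ℂ := by
  simp only [PiLp.inner_apply, RCLike.inner_apply]
  simp only [Fintype.sum_prod_type]
  rw [show (∑ i : Fin d, ∑ j : Fin d, ∑ k : Fin d,
      y (i, j, k) * (starRingEnd ℂ) (ampl1 d T x (i, j, k)))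
      = ∑ k : Fin d, ∑ i : Fin d, ∑ j : Fin d,
      y (i, j, k) * (starRingEnd ℂ) (ampl1 d T x (i, j, k)) from
    (Finset.sum_congr rfl (fun i _ => Finset.sum_comm)).trans Finset.sum_comm]
  rfl

lemma inner_ampl1' (T : E2 d →L[ℂ] E2 d) (x y : E3 d) :
    ⟪x, ampl1 d T y⟫_ℂ = ∑ k : Fin d, ⟪slice1 x k, T (slice1 y k)⟫_ℂ := by
  rw [← inner_conj_symm, inner_ampl1, map_sum]
  simp only [inner_conj_symm]

lemma re_inner_ampl1 (T : E2 d →L[ℂ] E2 d) (x : E3 d) :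
    RCLike.re ⟪ampl1 d T x, x⟫_ℂ = ∑ k : Fin d, RCLike.re ⟪T (slice1 x k), slice1 x k⟫_ℂ := by
  rw [inner_ampl1, map_sum]

lemma normsq_slice1 (x : E3 d) : ‖x‖^2 = ∑ k : Fin d, ‖slice1 x k‖^2 := by
  have h := re_inner_ampl1 (1 : E2 d →L[ℂ] E2 d) x
  rw [ampl1_one] at h
  simp only [ContinuousLinearMap.one_apply, inner_self_eq_norm_sq] at h
  exact h

def slice2 (x : E3 d) (k : Fin d) : E2 d := WithLp.toLp 2 (fun r : Fin d × Fin d => x (k, r.1, r.2))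

lemma ampl2_one : ampl2 d (1 : E2 d →L[ℂ] E2 d) = 1 := by
  ext x p; rfl

lemma inner_ampl2 (T : E2 d →L[ℂ] E2 d) (x y : E3 d) :
    ⟪ampl2 d T x, y⟫_ℂ = ∑ k : Fin d, ⟪T (slice2 x k), slice2 y k⟫_ℂ := by
  simp only [PiLp.inner_apply, RCLike.inner_apply]
  simp only [Fintype.sum_prod_type]
  rfl

lemma inner_ampl2' (T : E2 d →L[ℂ] E2 d) (x y : E3 d) :
    ⟪x, ampl2 d T y⟫_ℂ = ∑ k : Fin d, ⟪slice2 x k, T (slice2 y k)⟫_ℂ := by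
  rw [← inner_conj_symm, inner_ampl2, map_sum]
  simp only [inner_conj_symm]

lemma re_inner_ampl2 (T : E2 d →L[ℂ] E2 d) (x : E3 d) :
    RCLike.re ⟪ampl2 d T x, x⟫_ℂ = ∑ k : Fin d, RCLike.re ⟪T (slice2 x k), slice2 x k⟫_ℂ := by
  rw [inner_ampl2, map_sum]

lemma normsq_slice2 (x : E3 d) : ‖x‖^2 = ∑ k : Fin d, ‖slice2 x k‖^2 := by
  have h := re_inner_ampl2 (1 : E2 d →L[ℂ] E2 d) x
  rw [ampl2_one] at h
  simp only [ContinuousLinearMap.one_apply, inner_self_eq_norm_sq] at h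
  exact h

end P3aux

open scoped InnerProductSpace

section Abs
variable {E : Type*} [NormedAddCommGroup E] [InnerProductSpace ℂ E]

lemma re_ofReal_mul' (t : ℝ) (z : ℂ) : RCLike.re ((t : ℂ) * z) = t * RCLike.re z := by
  simp

/-- polarization-type bound: symmetric + form bound gives norm bound. -/
lemma norm_apply_le_of_symm (A : E →L[ℂ] E)
    (hsymm : ∀ x y : E, ⟪A x, y⟫_ℂ = ⟪x, A y⟫_ℂ)
    (hub : ∀ x : E, |RCLike.re ⟪A x, x⟫_ℂ| ≤ ‖x‖ ^ 2) (x : E) : ‖A x‖ ≤ ‖x‖ := by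
  rcases eq_or_ne (A x) 0 with h | h
  · simp [h]
  have hx : x ≠ 0 := by rintro rfl; exact h (map_zero A)
  have hApos : 0 < ‖A x‖ := norm_pos_iff.mpr h
  have hxpos : 0 < ‖x‖ := norm_pos_iff.mpr hx
  set c : ℝ := ‖x‖ / ‖A x‖ with hc
  have hcpos : 0 < c := div_pos hxpos hApos
  set y : E := (c : ℂ) • A x with hy
  have hyn : ‖y‖ = ‖x‖ := by
    rw [hy, norm_smul]
    simp only [Complex.norm_real, Real.norm_eq_abs, abs_of_pos hcpos, hc]
    rw [abs_of_pos (div_pos hxpos hApos)]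
    field_simp
  -- polarization
  have key : 4 * RCLike.re ⟪A x, y⟫_ℂ
      = RCLike.re ⟪A (x + y), x + y⟫_ℂ - RCLike.re ⟪A (x - y), x - y⟫_ℂ := by
    have h1 : ⟪A y, x⟫_ℂ = ⟪y, A x⟫_ℂ := hsymm y x
    have h2 : RCLike.re ⟪y, A x⟫_ℂ = RCLike.re ⟪A x, y⟫_ℂ := by
      rw [← inner_conj_symm]; exact (RCLike.conj_re _)
    have e1 : ⟪A (x + y), x + y⟫_ℂ
        = ⟪A x, x⟫_ℂ + ⟪A x, y⟫_ℂ + ⟪A y, x⟫_ℂ + ⟪A y, y⟫_ℂ := by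
      rw [map_add, inner_add_left, inner_add_right, inner_add_right]; ring
    have e2 : ⟪A (x - y), x - y⟫_ℂ
        = ⟪A x, x⟫_ℂ - ⟪A x, y⟫_ℂ - ⟪A y, x⟫_ℂ + ⟪A y, y⟫_ℂ := by
      rw [map_sub, inner_sub_left, inner_sub_right, inner_sub_right]; ring
    rw [e1, e2, h1]
    simp only [map_add, map_sub]
    rw [h2]; ring
  have hb1 := hub (x + y)
  have hb2 := hub (x - y)
  have par : ‖x + y‖ ^ 2 + ‖x - y‖ ^ 2 = 2 * (‖x‖ ^ 2 + ‖y‖ ^ 2) := by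
    have := parallelogram_law_with_norm ℂ x y
    ring_nf; ring_nf at this; linarith
  have hre : RCLike.re ⟪A x, y⟫_ℂ = c * ‖A x‖ ^ 2 := by
    rw [hy, inner_smul_right, re_ofReal_mul', inner_self_eq_norm_sq]
  have hmain : 4 * (c * ‖A x‖ ^ 2) ≤ 2 * (‖x‖ ^ 2 + ‖y‖ ^ 2) := by
    rw [← hre, ← par]
    have := abs_le.mp hb1
    have := abs_le.mp hb2
    rw [key]; linarith
  rw [hyn] at hmain
  have hcc : c * ‖A x‖ ^ 2 = ‖x‖ * ‖A x‖ := by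
    rw [hc]; field_simp
  rw [hcc] at hmain
  nlinarith

/-- positive form with zero at x₀ forces A x₀ = 0 (needs symmetry). -/
lemma apply_eq_zero_of_min (A : E →L[ℂ] E)
    (hsymm : ∀ x y : E, ⟪A x, y⟫_ℂ = ⟪x, A y⟫_ℂ)
    (hpos : ∀ x : E, 0 ≤ RCLike.re ⟪A x, x⟫_ℂ) (x₀ : E)
    (h0 : RCLike.re ⟪A x₀, x₀⟫_ℂ = 0) : A x₀ = 0 := by
  have main : ∀ y : E, RCLike.re ⟪A x₀, y⟫_ℂ = 0 := by
    intro y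
    by_contra hr
    have hsy : RCLike.re ⟪A y, x₀⟫_ℂ = RCLike.re ⟪A x₀, y⟫_ℂ := by
      rw [hsymm y x₀, ← inner_conj_symm, RCLike.conj_re]
    have key : ∀ t : ℝ, 0 ≤ 2 * t * RCLike.re ⟪A x₀, y⟫_ℂ
        + t ^ 2 * RCLike.re ⟪A y, y⟫_ℂ := by
      intro t
      have hq := hpos (x₀ + (t : ℂ) • y)
      have expand : ⟪A (x₀ + (t:ℂ) • y), x₀ + (t:ℂ) • y⟫_ℂ
          = ⟪A x₀, x₀⟫_ℂ + (t:ℂ) * ⟪A x₀, y⟫_ℂ + (t:ℂ) * ⟪A y, x₀⟫_ℂ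
            + (t:ℂ) * ((t:ℂ) * ⟪A y, y⟫_ℂ) := by
        rw [map_add, map_smul, inner_add_left, inner_add_right, inner_add_right,
          inner_smul_left, inner_smul_right, inner_smul_left, inner_smul_right,
          Complex.conj_ofReal]
        ring
      rw [expand] at hq
      simp only [map_add, re_ofReal_mul', h0, hsy] at hq
      nlinarith [hq]
    set r : ℝ := RCLike.re ⟪A x₀, y⟫_ℂ with hrdef
    set φ : ℝ := RCLike.re ⟪A y, y⟫_ℂ with hφ
    have hφ0 : 0 ≤ φ := hpos y
    have hq := key (-r / (φ + 1))
    have hr2 : 0 < r ^ 2 := by positivity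
    have hden : (0:ℝ) < φ + 1 := by linarith
    have : 2 * (-r / (φ + 1)) * r + (-r / (φ + 1)) ^ 2 * φ
        = (r ^ 2 * (-φ - 2)) / (φ + 1) ^ 2 := by
      field_simp; ring
    rw [this] at hq
    have hnum : r ^ 2 * (-φ - 2) < 0 := by nlinarith
    nlinarith [div_neg_of_neg_of_pos hnum (by positivity : (0:ℝ) < (φ + 1) ^ 2)]
  have h1 := main (A x₀)
  have h2 := main ((Complex.I : ℂ) • A x₀)
  rw [inner_smul_right] at h2
  have him : (⟪A x₀, A x₀⟫_ℂ).im = 0 := by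
    simp only [RCLike.re_to_complex, Complex.mul_re, Complex.I_re, Complex.I_im] at h2
    simpa using h2
  have hre0 : (⟪A x₀, A x₀⟫_ℂ).re = 0 := by simpa using h1
  have : ⟪A x₀, A x₀⟫_ℂ = 0 := Complex.ext hre0 him
  exact inner_self_eq_zero.mp this
end Abs

section Fs
variable {E : Type*} [NormedAddCommGroup E] [InnerProductSpace ℂ E] [CompleteSpace E]

noncomputable def Fs (a b : E →L[ℂ] E) (s : ℝ) : E →L[ℂ] E :=
  1 + (s:ℂ) • (a + b) + ((s:ℂ))^2 • (a * b + b * a) + ((s:ℂ))^3 • (b * a * b)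

lemma Fs_sa (a b : E →L[ℂ] E) (ha : IsSelfAdjoint a) (hb : IsSelfAdjoint b) (s : ℝ) :
    IsSelfAdjoint (Fs a b s) := by
  have hs : ∀ k : ℕ, IsSelfAdjoint ((s:ℂ)^k) := by
    intro k
    have : IsSelfAdjoint ((s:ℂ)) := by
      simp [IsSelfAdjoint, RCLike.star_def, Complex.conj_ofReal]
    exact this.pow k
  have hs1 : IsSelfAdjoint ((s:ℂ)) := by
    simp [IsSelfAdjoint, RCLike.star_def, Complex.conj_ofReal]
  have h1 : IsSelfAdjoint (a + b) := ha.add hb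
  have h2 : IsSelfAdjoint (a * b + b * a) := by
    simp only [IsSelfAdjoint, star_add, star_mul, ha.star_eq, hb.star_eq]
    exact add_comm _ _
  have h3 : IsSelfAdjoint (b * a * b) := by
    simp only [IsSelfAdjoint, star_mul, ha.star_eq, hb.star_eq, mul_assoc]
  have g1 : IsSelfAdjoint ((s:ℂ) • (a + b)) := hs1.smul h1
  have g2 : IsSelfAdjoint (((s:ℂ))^2 • (a * b + b * a)) := (hs 2).smul h2
  have g3 : IsSelfAdjoint (((s:ℂ))^3 • (b * a * b)) := (hs 3).smul h3
  have g0 : IsSelfAdjoint (1 : E →L[ℂ] E) := IsSelfAdjoint.one _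
  exact ((g0.add g1).add g2).add g3

lemma Fs_factor1 (a b : E →L[ℂ] E) (s : ℝ) :
    Fs a b s = (1 + (s:ℂ) • b) * (1 + (s:ℂ) • a + ((s:ℂ))^2 • (a * b)) := by
  ext x
  simp only [Fs, ContinuousLinearMap.add_apply, ContinuousLinearMap.smul_apply,
    ContinuousLinearMap.mul_apply, ContinuousLinearMap.one_apply, map_add, map_smul]
  module

lemma Fs_factor2 (a b : E →L[ℂ] E) (hbr : ∀ x, a (b (a x)) = b (a (b x))) (s : ℝ) :
    Fs a b s = (1 + (s:ℂ) • a) * (1 + (s:ℂ) • b + ((s:ℂ))^2 • (b * a)) := by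
  ext x
  simp only [Fs, ContinuousLinearMap.add_apply, ContinuousLinearMap.smul_apply,
    ContinuousLinearMap.mul_apply, ContinuousLinearMap.one_apply, map_add, map_smul]
  rw [← hbr x]
  module

lemma Fs_zero (a b : E →L[ℂ] E) : Fs a b 0 = 1 := by
  simp [Fs]

lemma Fs_one (a b : E →L[ℂ] E) : Fs a b 1 = (1 + b) * (1 + a + a * b) := by
  rw [Fs_factor1 a b 1]
  norm_num

lemma Fs_continuous (a b : E →L[ℂ] E) : Continuous (Fs a b) := by
  unfold Fs
  have h : Continuous fun s : ℝ => (s : ℂ) := Complex.continuous_ofReal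
  exact ((continuous_const.add ((h.smul continuous_const))).add
    (((h.pow 2).smul continuous_const))).add (((h.pow 3).smul continuous_const))

lemma inj_aux (b : E →L[ℂ] E) (hbnd : ∀ x : E, -‖x‖^2 ≤ RCLike.re ⟪b x, x⟫_ℂ)
    {s : ℝ} (hs0 : 0 ≤ s) (hs1 : s < 1) {w : E}
    (hw : (1 + (s:ℂ) • b) w = 0) : w = 0 := by
  have h := congrArg (fun z => RCLike.re ⟪z, w⟫_ℂ) hw
  simp only [ContinuousLinearMap.add_apply, ContinuousLinearMap.smul_apply,
    ContinuousLinearMap.one_apply, inner_add_left, inner_smul_left, Complex.conj_ofReal,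
    map_add, re_ofReal_mul', inner_self_eq_norm_sq, inner_zero_left, map_zero] at h
  have hb := hbnd w
  have h1 : (1 - s) * ‖w‖^2 ≤ 0 := by nlinarith
  have h2 : ‖w‖^2 ≤ 0 := by nlinarith
  have : ‖w‖ = 0 := by nlinarith [norm_nonneg w]
  exact norm_eq_zero.mp this
end Fs

section MEig
variable {E : Type*} [NormedAddCommGroup E] [InnerProductSpace ℂ E] [CompleteSpace E]
  [ProperSpace E] [Nontrivial E]

noncomputable def mEig (A : E →L[ℂ] E) : ℝ :=
  sInf (A.reApplyInnerSelf '' Metric.sphere 0 1)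

lemma sphere_ne : (Metric.sphere (0:E) 1).Nonempty :=
  NormedSpace.sphere_nonempty.mpr zero_le_one

lemma reApply_bound (A : E →L[ℂ] E) {x : E} (hx : ‖x‖ = 1) :
    |A.reApplyInnerSelf x| ≤ ‖A‖ := by
  rw [ContinuousLinearMap.reApplyInnerSelf]
  calc |RCLike.re ⟪A x, x⟫_ℂ| ≤ ‖⟪A x, x⟫_ℂ‖ := RCLike.abs_re_le_norm _
    _ ≤ ‖A x‖ * ‖x‖ := norm_inner_le_norm _ _
    _ ≤ (‖A‖ * ‖x‖) * ‖x‖ := by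
        have := A.le_opNorm x
        nlinarith [norm_nonneg x]
    _ = ‖A‖ := by rw [hx]; ring

lemma mEig_bddBelow (A : E →L[ℂ] E) :
    BddBelow (A.reApplyInnerSelf '' Metric.sphere 0 1) := by
  refine ⟨-‖A‖, ?_⟩
  rintro y ⟨x, hx, rfl⟩
  have := abs_le.mp (reApply_bound A (mem_sphere_zero_iff_norm.mp hx))
  linarith [this.1]

lemma mEig_le (A : E →L[ℂ] E) {x : E} (hx : ‖x‖ = 1) :
    mEig A ≤ A.reApplyInnerSelf x :=
  csInf_le (mEig_bddBelow A) ⟨x, mem_sphere_zero_iff_norm.mpr hx, rfl⟩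

lemma mEig_sub_le (A B : E →L[ℂ] E) : mEig B - ‖A - B‖ ≤ mEig A := by
  apply le_csInf ((sphere_ne (E := E)).image _)
  rintro y ⟨x, hx, rfl⟩
  have hx1 : ‖x‖ = 1 := mem_sphere_zero_iff_norm.mp hx
  have hdiff : |A.reApplyInnerSelf x - B.reApplyInnerSelf x| ≤ ‖A - B‖ := by
    have : A.reApplyInnerSelf x - B.reApplyInnerSelf x = (A - B).reApplyInnerSelf x := by
      simp [ContinuousLinearMap.reApplyInnerSelf, ContinuousLinearMap.sub_apply,
        inner_sub_left]
    rw [this]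
    exact reApply_bound _ hx1
  have h1 := mEig_le B hx1
  have := abs_le.mp hdiff
  linarith [this.1]

lemma mEig_lipschitz : LipschitzWith 1 (mEig (E := E)) := by
  apply LipschitzWith.of_dist_le_mul
  intro A B
  rw [Real.dist_eq, dist_eq_norm, NNReal.coe_one, one_mul]
  apply abs_le.mpr
  have h : ‖B - A‖ = ‖A - B‖ := by rw [← neg_sub, norm_neg]
  have h1 := mEig_sub_le A B
  have h2 := mEig_sub_le B A
  rw [h] at h2
  constructor <;> linarith

lemma mEig_one : mEig (1 : E →L[ℂ] E) = 1 := by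
  apply IsLeast.csInf_eq
  constructor
  · obtain ⟨x, hx⟩ := sphere_ne (E := E)
    refine ⟨x, hx, ?_⟩
    have hx1 : ‖x‖ = 1 := mem_sphere_zero_iff_norm.mp hx
    simp [ContinuousLinearMap.reApplyInnerSelf, inner_self_eq_norm_sq, hx1]
  · rintro y ⟨x, hx, rfl⟩
    have hx1 : ‖x‖ = 1 := mem_sphere_zero_iff_norm.mp hx
    simp [ContinuousLinearMap.reApplyInnerSelf, inner_self_eq_norm_sq, hx1]

lemma reApply_real_smul (A : E →L[ℂ] E) (c : ℝ) (x : E) :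
    A.reApplyInnerSelf (((c:ℂ)) • x) = c^2 * A.reApplyInnerSelf x := by
  simp only [ContinuousLinearMap.reApplyInnerSelf, map_smul, inner_smul_left,
    inner_smul_right, Complex.conj_ofReal]
  rw [show ((c:ℂ) * ((c:ℂ) * ⟪A x, x⟫_ℂ)) = ((c^2 : ℝ):ℂ) * ⟪A x, x⟫_ℂ by push_cast; ring,
    re_ofReal_mul']
end MEig

section Main
variable {E : Type*} [NormedAddCommGroup E] [InnerProductSpace ℂ E] [CompleteSpace E]
  [ProperSpace E] [Nontrivial E]

theorem abstract_P3 (a b : E →L[ℂ] E)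
    (hsa : IsSelfAdjoint a) (hsb : IsSelfAdjoint b)
    (hla : ∀ x : E, -‖x‖^2 ≤ RCLike.re ⟪a x, x⟫_ℂ)
    (hua : ∀ x : E, RCLike.re ⟪a x, x⟫_ℂ ≤ ‖x‖^2)
    (hlb : ∀ x : E, -‖x‖^2 ≤ RCLike.re ⟪b x, x⟫_ℂ)
    (hub : ∀ x : E, RCLike.re ⟪b x, x⟫_ℂ ≤ ‖x‖^2)
    (hbr : ∀ x : E, a (b (a x)) = b (a (b x))) :
    ((1 + b) * (1 + a + a * b)).IsPositive := by
  have hsymm_a : ∀ x y : E, ⟪a x, y⟫_ℂ = ⟪x, a y⟫_ℂ :=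
    (ContinuousLinearMap.isSelfAdjoint_iff_isSymmetric.mp hsa)
  have hsymm_b : ∀ x y : E, ⟪b x, y⟫_ℂ = ⟪x, b y⟫_ℂ :=
    (ContinuousLinearMap.isSelfAdjoint_iff_isSymmetric.mp hsb)
  have hna : ∀ x : E, ‖a x‖ ≤ ‖x‖ :=
    norm_apply_le_of_symm a hsymm_a (fun x => abs_le.mpr ⟨hla x, hua x⟩)
  have hnb : ∀ x : E, ‖b x‖ ≤ ‖x‖ :=
    norm_apply_le_of_symm b hsymm_b (fun x => abs_le.mpr ⟨hlb x, hub x⟩)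
  have hP_sa : IsSelfAdjoint ((1 + b) * (1 + a + a * b)) := by
    rw [← Fs_one a b]
    exact Fs_sa a b hsa hsb 1
  constructor
  · exact ContinuousLinearMap.isSelfAdjoint_iff_isSymmetric.mp hP_sa
  -- positivity of the quadratic form
  by_contra hcon
  push_neg at hcon
  obtain ⟨x₁, hx₁⟩ := hcon
  set P := (1 + b) * (1 + a + a * b) with hP
  have hx₁ne : x₁ ≠ 0 := by
    rintro rfl
    simp [ContinuousLinearMap.reApplyInnerSelf] at hx₁
  have hx₁n : 0 < ‖x₁‖ := norm_pos_iff.mpr hx₁ne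
  set u : E := ((‖x₁‖⁻¹ : ℝ) : ℂ) • x₁ with hu
  have hun : ‖u‖ = 1 := by
    rw [hu, norm_smul]
    simp [abs_of_pos (inv_pos.mpr hx₁n), inv_mul_cancel₀ hx₁n.ne']
  have hqu : P.reApplyInnerSelf u < 0 := by
    rw [hu, reApply_real_smul]
    have h2 : (0:ℝ) < (‖x₁‖⁻¹)^2 := by positivity
    exact mul_neg_of_pos_of_neg h2 hx₁
  -- the min-eigenvalue function along the path
  set g : ℝ → ℝ := fun s => mEig (Fs a b s) with hg
  have hgcont : Continuous g := (mEig_lipschitz.continuous).comp (Fs_continuous a b)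
  have hg0 : g 0 = 1 := by rw [hg]; simp only [Fs_zero]; exact mEig_one
  have hg1 : g 1 < 0 := by
    have : mEig (Fs a b 1) ≤ (Fs a b 1).reApplyInnerSelf u := mEig_le _ hun
    rw [Fs_one a b] at this
    calc g 1 = mEig (Fs a b 1) := rfl
      _ ≤ P.reApplyInnerSelf u := by rw [Fs_one a b]; exact this
      _ < 0 := hqu
  -- IVT
  have hIVT := intermediate_value_Icc' (by norm_num : (0:ℝ) ≤ 1) hgcont.continuousOn
  have h0mem : (0:ℝ) ∈ Set.Icc (g 1) (g 0) := ⟨le_of_lt hg1, by rw [hg0]; exact zero_le_one⟩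
  obtain ⟨s₀, hs₀mem, hgs₀⟩ := hIVT h0mem
  have hs₀0 : 0 ≤ s₀ := hs₀mem.1
  have hs₀1 : s₀ < 1 := by
    rcases lt_or_eq_of_le hs₀mem.2 with h | h
    · exact h
    · exfalso; rw [h] at hgs₀; linarith
  set A := Fs a b s₀ with hA
  have hAsa := Fs_sa a b hsa hsb s₀
  have hAsymm : ∀ x y : E, ⟪A x, y⟫_ℂ = ⟪x, A y⟫_ℂ :=
    (ContinuousLinearMap.isSelfAdjoint_iff_isSymmetric.mp hAsa)
  -- the min over the sphere is attained
  obtain ⟨x₀, hx₀s, hmin⟩ := (isCompact_sphere (0:E) 1).exists_isMinOn sphere_ne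
    (A.reApplyInnerSelf_continuous.continuousOn)
  have hx₀ : ‖x₀‖ = 1 := mem_sphere_zero_iff_norm.mp hx₀s
  have hx₀ne : x₀ ≠ 0 := by rw [← norm_ne_zero_iff, hx₀]; norm_num
  have hAq0 : A.reApplyInnerSelf x₀ = 0 := by
    have hleast : IsLeast (A.reApplyInnerSelf '' Metric.sphere 0 1)
        (A.reApplyInnerSelf x₀) := by
      refine ⟨⟨x₀, hx₀s, rfl⟩, ?_⟩
      rintro y ⟨x, hx, rfl⟩
      exact hmin hx
    have : mEig A = A.reApplyInnerSelf x₀ := hleast.csInf_eq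
    rw [← this]; exact hgs₀
  have hmA : mEig A = 0 := hgs₀
  have hApos : ∀ x : E, 0 ≤ RCLike.re ⟪A x, x⟫_ℂ := by
    intro x
    rcases eq_or_ne x 0 with rfl | hxne
    · simp
    have hxn : 0 < ‖x‖ := norm_pos_iff.mpr hxne
    have h1 : ‖((‖x‖⁻¹ : ℝ) : ℂ) • x‖ = 1 := by
      rw [norm_smul]; simp [abs_of_pos (inv_pos.mpr hxn), inv_mul_cancel₀ hxn.ne']
    have h2 : 0 ≤ A.reApplyInnerSelf (((‖x‖⁻¹ : ℝ) : ℂ) • x) := hmA ▸ mEig_le A h1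
    rw [reApply_real_smul] at h2
    have h3 : (0:ℝ) < (‖x‖⁻¹)^2 := by positivity
    have h4 : 0 ≤ A.reApplyInnerSelf x := by nlinarith
    simpa [ContinuousLinearMap.reApplyInnerSelf] using h4
  -- kernel vector
  have hker : A x₀ = 0 := by
    apply apply_eq_zero_of_min A hAsymm hApos
    simpa [ContinuousLinearMap.reApplyInnerSelf] using hAq0
  -- two factorizations
  have hf1 : (1 + (s₀:ℂ) • b) ((1 + (s₀:ℂ) • a + ((s₀:ℂ))^2 • (a * b)) x₀) = 0 := by
    have := Fs_factor1 a b s₀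
    rw [hA, this] at hker
    simpa [ContinuousLinearMap.mul_apply] using hker
  have hf2 : (1 + (s₀:ℂ) • a) ((1 + (s₀:ℂ) • b + ((s₀:ℂ))^2 • (b * a)) x₀) = 0 := by
    have := Fs_factor2 a b hbr s₀
    rw [hA, this] at hker
    simpa [ContinuousLinearMap.mul_apply] using hker
  have e1' := inj_aux b hlb hs₀0 hs₀1 hf1
  have e2' := inj_aux a hla hs₀0 hs₀1 hf2
  have e1 : x₀ + (s₀:ℂ) • a x₀ + ((s₀:ℂ))^2 • a (b x₀) = 0 := by
    simpa [ContinuousLinearMap.add_apply, ContinuousLinearMap.smul_apply,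
      ContinuousLinearMap.mul_apply, ContinuousLinearMap.one_apply] using e1'
  have e2 : x₀ + (s₀:ℂ) • b x₀ + ((s₀:ℂ))^2 • b (a x₀) = 0 := by
    simpa [ContinuousLinearMap.add_apply, ContinuousLinearMap.smul_apply,
      ContinuousLinearMap.mul_apply, ContinuousLinearMap.one_apply] using e2'
  have hb1 : b x₀ + (s₀:ℂ) • b (a x₀) + ((s₀:ℂ))^2 • b (a (b x₀)) = 0 := by
    have hmap := congrArg b e1
    simpa [map_add, map_smul] using hmap
  have h3 : ((s₀:ℂ))^3 • b (a (b x₀)) = x₀ := by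
    have : ((s₀:ℂ))^3 • b (a (b x₀)) - x₀
        = (s₀:ℂ) • (b x₀ + (s₀:ℂ) • b (a x₀) + ((s₀:ℂ))^2 • b (a (b x₀)))
          - (x₀ + (s₀:ℂ) • b x₀ + ((s₀:ℂ))^2 • b (a x₀)) := by module
    rw [hb1, e2] at this
    simp at this
    exact sub_eq_zero.mp this
  -- contradiction with norms
  have hnorm : ‖x₀‖ ≤ s₀^3 * ‖x₀‖ := by
    calc ‖x₀‖ = ‖((s₀:ℂ))^3 • b (a (b x₀))‖ := by rw [h3]
      _ = |s₀|^3 * ‖b (a (b x₀))‖ := by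
          rw [norm_smul]
          simp [abs_pow]
      _ ≤ |s₀|^3 * ‖x₀‖ := by
          have h5 : ‖b (a (b x₀))‖ ≤ ‖x₀‖ :=
            le_trans (hnb _) (le_trans (hna _) (hnb _))
          have : (0:ℝ) ≤ |s₀|^3 := by positivity
          nlinarith
      _ = s₀^3 * ‖x₀‖ := by rw [abs_of_nonneg hs₀0]
  have hlt : s₀^3 < 1 := pow_lt_one₀ hs₀0 hs₀1 (by norm_num)
  rw [hx₀] at hnorm
  nlinarith
end Main


/-- If `T` is self-adjoint with `-1 ≤ T ≤ 1` (i.e. `1 ± T ≥ 0`)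
and the braid relation `T₁T₂T₁ = T₂T₁T₂` holds, then
`P₃ = (1 + T₂)(1 + T₁ + T₁T₂)` is positive semidefinite. -/
theorem P3_positive_of_braided (d : ℕ) (hd : 1 ≤ d)
    (T : EuclideanSpace ℂ (Fin d × Fin d) →L[ℂ] EuclideanSpace ℂ (Fin d × Fin d))
    (hsa : IsSelfAdjoint T)
    (hpos1 : (1 + T).IsPositive) (hpos2 : (1 - T).IsPositive)
    (hbraid : ampl1 d T ∘L ampl2 d T ∘L ampl1 d T = ampl2 d T ∘L ampl1 d T ∘L ampl2 d T) :
    ((1 + ampl2 d T) ∘L (1 + ampl1 d T + ampl1 d T ∘L ampl2 d T)).IsPositive := by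
  classical
  haveI : Nonempty (Fin d) := ⟨⟨0, hd⟩⟩
  haveI : Nontrivial (EuclideanSpace ℂ (Fin d × Fin d × Fin d)) := by
    refine ⟨⟨EuclideanSpace.single (⟨0, hd⟩, ⟨0, hd⟩, ⟨0, hd⟩) (1:ℂ), 0, ?_⟩⟩
    intro h
    have := congrArg (fun z : P3aux.E3 d => z (⟨0, hd⟩, ⟨0, hd⟩, ⟨0, hd⟩)) h
    simp [EuclideanSpace.single_apply] at this
  set a := ampl1 d T with ha
  set b := ampl2 d T with hbdef
  -- T-level facts
  have hTsymm : ∀ x y : P3aux.E2 d, ⟪T x, y⟫_ℂ = ⟪x, T y⟫_ℂ :=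
    ContinuousLinearMap.isSelfAdjoint_iff_isSymmetric.mp hsa
  have hTl : ∀ y : P3aux.E2 d, -‖y‖^2 ≤ RCLike.re ⟪T y, y⟫_ℂ := by
    intro y
    have h := hpos1.2 y
    simp only [ContinuousLinearMap.reApplyInnerSelf, ContinuousLinearMap.add_apply,
      ContinuousLinearMap.one_apply, inner_add_left, map_add, inner_self_eq_norm_sq] at h
    linarith
  have hTu : ∀ y : P3aux.E2 d, RCLike.re ⟪T y, y⟫_ℂ ≤ ‖y‖^2 := by
    intro y
    have h := hpos2.2 y
    simp only [ContinuousLinearMap.reApplyInnerSelf, ContinuousLinearMap.sub_apply,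
      ContinuousLinearMap.one_apply, inner_sub_left, map_sub, inner_self_eq_norm_sq] at h
    linarith
  -- amplified facts
  have hsymm_a : ∀ x y : P3aux.E3 d, ⟪a x, y⟫_ℂ = ⟪x, a y⟫_ℂ := by
    intro x y
    rw [ha, P3aux.inner_ampl1, P3aux.inner_ampl1']
    exact Finset.sum_congr rfl fun k _ => hTsymm _ _
  have hsymm_b : ∀ x y : P3aux.E3 d, ⟪b x, y⟫_ℂ = ⟪x, b y⟫_ℂ := by
    intro x y
    rw [hbdef, P3aux.inner_ampl2, P3aux.inner_ampl2']
    exact Finset.sum_congr rfl fun k _ => hTsymm _ _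
  have hsa_a : IsSelfAdjoint a :=
    ContinuousLinearMap.isSelfAdjoint_iff_isSymmetric.mpr hsymm_a
  have hsa_b : IsSelfAdjoint b :=
    ContinuousLinearMap.isSelfAdjoint_iff_isSymmetric.mpr hsymm_b
  have hla : ∀ x : P3aux.E3 d, -‖x‖^2 ≤ RCLike.re ⟪a x, x⟫_ℂ := by
    intro x
    rw [ha, P3aux.re_inner_ampl1, P3aux.normsq_slice1 x, ← Finset.sum_neg_distrib]
    exact Finset.sum_le_sum fun k _ => hTl _
  have hua : ∀ x : P3aux.E3 d, RCLike.re ⟪a x, x⟫_ℂ ≤ ‖x‖^2 := by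
    intro x
    rw [ha, P3aux.re_inner_ampl1, P3aux.normsq_slice1 x]
    exact Finset.sum_le_sum fun k _ => hTu _
  have hlb : ∀ x : P3aux.E3 d, -‖x‖^2 ≤ RCLike.re ⟪b x, x⟫_ℂ := by
    intro x
    rw [hbdef, P3aux.re_inner_ampl2, P3aux.normsq_slice2 x, ← Finset.sum_neg_distrib]
    exact Finset.sum_le_sum fun k _ => hTl _
  have hub : ∀ x : P3aux.E3 d, RCLike.re ⟪b x, x⟫_ℂ ≤ ‖x‖^2 := by
    intro x
    rw [hbdef, P3aux.re_inner_ampl2, P3aux.normsq_slice2 x]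
    exact Finset.sum_le_sum fun k _ => hTu _
  have hbr : ∀ x : P3aux.E3 d, a (b (a x)) = b (a (b x)) := by
    intro x
    have h := DFunLike.congr_fun hbraid x
    simpa [ContinuousLinearMap.comp_apply] using h
  have hmain := abstract_P3 a b hsa_a hsa_b hla hua hlb hub hbr
  exact hmain
end

section
/- Let T be self-adjoint on H ⊗ H with −1 ≤ T ≤ 1 satisfying the braid relation, and R₃ = 1 + T₁ + T₁T₂ on H^{⊗3}. Then ker(1 + T₁) ⊆ ker P₃ and ker(1 + T₂) ⊆ ker P₃, where P₃ = (1 + T₂) R₃. -/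
/-- Let `T` be self-adjoint on `H ⊗ H` (here `H = ℂ^d`) with
`-1 ≤ T ≤ 1` and braided. Then `ker (1 + T₁) ⊆ ker P₃` and
`ker (1 + T₂) ⊆ ker P₃`, where `P₃ = (1 + T₂)(1 + T₁ + T₁T₂)`. -/
theorem ker_le_ker_P3_of_braided (d : ℕ) (hd : 1 ≤ d)
    (T : EuclideanSpace ℂ (Fin d × Fin d) →L[ℂ] EuclideanSpace ℂ (Fin d × Fin d))
    (hsa : IsSelfAdjoint T)
    (hpos1 : (1 + T).IsPositive) (hpos2 : (1 - T).IsPositive)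
    (hbraid : ampl1 d T ∘L ampl2 d T ∘L ampl1 d T = ampl2 d T ∘L ampl1 d T ∘L ampl2 d T) :
    LinearMap.ker (1 + ampl1 d T).toLinearMap ≤
        LinearMap.ker ((1 + ampl2 d T) ∘L (1 + ampl1 d T + ampl1 d T ∘L ampl2 d T)).toLinearMap ∧
      LinearMap.ker (1 + ampl2 d T).toLinearMap ≤
        LinearMap.ker ((1 + ampl2 d T) ∘L (1 + ampl1 d T + ampl1 d T ∘L ampl2 d T)).toLinearMap := by
  set A := ampl1 d T with hAdef
  set B := ampl2 d T with hBdef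
  constructor
  · intro x hx
    have hA : A x = -x := by
      have h := LinearMap.mem_ker.mp hx
      have h2 : x + A x = 0 := by simpa using h
      exact eq_neg_of_add_eq_zero_right h2
    rw [LinearMap.mem_ker]
    have hbr := congrArg (fun f => f x) hbraid
    simp only [ContinuousLinearMap.comp_apply] at hbr
    rw [hA, map_neg, map_neg] at hbr
    simp only [ContinuousLinearMap.coe_coe, ContinuousLinearMap.comp_apply, ContinuousLinearMap.add_apply,
      ContinuousLinearMap.one_apply, hA]
    have h3 : x + -x + A (B x) = A (B x) := by abel
    rw [h3, ← hbr]
    abel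
  · intro x hx
    have hB : B x = -x := by
      have h := LinearMap.mem_ker.mp hx
      have h2 : x + B x = 0 := by simpa using h
      exact eq_neg_of_add_eq_zero_right h2
    rw [LinearMap.mem_ker]
    simp only [ContinuousLinearMap.coe_coe, ContinuousLinearMap.comp_apply, ContinuousLinearMap.add_apply,
      ContinuousLinearMap.one_apply]
    have h3 : x + A x + A (B x) = x := by rw [hB, map_neg]; abel
    rw [h3, hB]
    abel
end
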